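/- The operators S⁺ = ∑ b^α (∂/∂a_β) V_{αβ} and S⁻ = ∑ a_α (∂/∂b^β) V^{αβ} commute with the operators T⁺ = ∑_γ a_γ b^γ and T⁻ = (1/4)∑_γ ∂²/∂a_γ∂b^γ: [S^±, T^±] = [S^±, T^∓] = 0, so the two sl(2) algebras generated by (S^±, S⁰) and (T^±, T⁰) mutually commute. -/

import Mathlib

open MvPolynomial

noncomputable section

abbrev P8 : Type := MvPolynomial (Fin 4 ⊕ Fin 4) ℝ

def mulX (v : Fin 4 ⊕ Fin 4) : Module.End ℝ P8 := LinearMap.mulLeft ℝ (X v)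

def dd (v : Fin 4 ⊕ Fin 4) : Module.End ℝ P8 := (pderiv v).toLinearMap

def Na : Module.End ℝ P8 := ∑ α : Fin 4, mulX (Sum.inl α) * dd (Sum.inl α)

def Nb : Module.End ℝ P8 := ∑ α : Fin 4, mulX (Sum.inr α) * dd (Sum.inr α)

/-- `S⁻ = ∑_{α,β} a_α (∂/∂b^β) V^{αβ}` for an antisymmetric matrix `Vup = V^{··}`. -/
def Sminus (Vup : Matrix (Fin 4) (Fin 4) ℝ) : Module.End ℝ P8 :=
  ∑ α : Fin 4, ∑ β : Fin 4, Vup α β • (mulX (Sum.inl α) * dd (Sum.inr β))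

/-- `S⁺ = ∑_{α,β} b^α (∂/∂a_β) V_{αβ}` for an antisymmetric matrix `Vdn = V_{··}`. -/
def Splus (Vdn : Matrix (Fin 4) (Fin 4) ℝ) : Module.End ℝ P8 :=
  ∑ α : Fin 4, ∑ β : Fin 4, Vdn α β • (mulX (Sum.inr α) * dd (Sum.inl β))

/-- `T⁺ = ∑_γ a_γ b^γ`. -/
def Tplus : Module.End ℝ P8 := ∑ γ : Fin 4, mulX (Sum.inl γ) * mulX (Sum.inr γ)

/-- `T⁻ = (1/4)∑_γ ∂²/∂a_γ∂b^γ`. -/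
def Tminus : Module.End ℝ P8 := (1/4 : ℝ) • ∑ γ : Fin 4, dd (Sum.inl γ) * dd (Sum.inr γ)

lemma pderiv_comm' {σ R : Type*} [CommSemiring R] [DecidableEq σ] (i j : σ) (p : MvPolynomial σ R) :
    pderiv i (pderiv j p) = pderiv j (pderiv i p) := by
  induction p using MvPolynomial.induction_on with
  | C a => simp
  | add p q hp hq => simp [hp, hq]
  | mul_X p k hp => simp [pderiv_mul, pderiv_X, Pi.single_apply, hp]; split_ifs <;> (try simp only [map_zero]) <;> ring

lemma mulX_comm' (v w : Fin 4 ⊕ Fin 4) : mulX v * mulX w = mulX w * mulX v := by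
  refine LinearMap.ext fun p => ?_
  simp only [mulX, Module.End.mul_apply, LinearMap.mulLeft_apply]; ring

lemma dd_comm' (v w : Fin 4 ⊕ Fin 4) : dd v * dd w = dd w * dd v := by
  refine LinearMap.ext fun p => ?_
  simp only [dd, Module.End.mul_apply, Derivation.coeFn_coe]
  exact pderiv_comm' v w p


lemma comm1 (u v w x : Fin 4 ⊕ Fin 4) :
    ⁅mulX u * dd v, mulX w * mulX x⁆ =
      (if w = v then mulX u * mulX x else 0) + (if x = v then mulX u * mulX w else 0) := by
  refine LinearMap.ext fun p => ?_
  simp only [Ring.lie_def, mulX, dd, LinearMap.sub_apply, Module.End.mul_apply,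
    LinearMap.mulLeft_apply, LinearMap.add_apply, Derivation.coeFn_coe, pderiv_mul,
    pderiv_X, Pi.single_apply]
  split_ifs <;>
    simp only [one_mul, zero_mul, mul_zero, mul_one, zero_add, add_zero, map_zero, map_add,
      LinearMap.zero_apply, Module.End.mul_apply, LinearMap.mulLeft_apply] <;>
    ring

lemma comm2 (u v w x : Fin 4 ⊕ Fin 4) :
    ⁅mulX u * dd v, dd w * dd x⁆ =
      -(if u = w then dd x * dd v else 0) - (if u = x then dd w * dd v else 0) := by
  refine LinearMap.ext fun p => ?_
  simp only [Ring.lie_def, mulX, dd, LinearMap.sub_apply, Module.End.mul_apply,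
    LinearMap.mulLeft_apply, LinearMap.add_apply, LinearMap.neg_apply, Derivation.coeFn_coe,
    pderiv_mul, pderiv_X, Pi.single_apply]
  split_ifs <;>
    simp only [one_mul, zero_mul, mul_zero, mul_one, zero_add, add_zero, map_zero, map_add,
      neg_zero, sub_zero, zero_sub, LinearMap.zero_apply, Module.End.mul_apply,
      LinearMap.mulLeft_apply, Derivation.coeFn_coe, pderiv_mul, pderiv_X, Pi.single_apply,
      pderiv_comm' w v, pderiv_comm' x v, pderiv_comm' x w] <;>
    (try split_ifs) <;> (try ring)

lemma sum_lie' {ι : Type*} (s : Finset ι) (f : ι → Module.End ℝ P8) (x : Module.End ℝ P8) :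
    ⁅∑ i ∈ s, f i, x⁆ = ∑ i ∈ s, ⁅f i, x⁆ := by
  simp [Ring.lie_def, Finset.sum_mul, Finset.mul_sum, Finset.sum_sub_distrib]

lemma lie_sum' {ι : Type*} (s : Finset ι) (f : ι → Module.End ℝ P8) (x : Module.End ℝ P8) :
    ⁅x, ∑ i ∈ s, f i⁆ = ∑ i ∈ s, ⁅x, f i⁆ := by
  simp [Ring.lie_def, Finset.sum_mul, Finset.mul_sum, Finset.sum_sub_distrib]

lemma smul_lie'' (t : ℝ) (x m : Module.End ℝ P8) : ⁅t • x, m⁆ = t • ⁅x, m⁆ := by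
  simp [Ring.lie_def, smul_sub, smul_mul_assoc, mul_smul_comm]

lemma lie_smul'' (t : ℝ) (x m : Module.End ℝ P8) : ⁅x, t • m⁆ = t • ⁅x, m⁆ := by
  simp [Ring.lie_def, smul_sub, smul_mul_assoc, mul_smul_comm]

lemma antisym_sum {M : Type*} [AddCommGroup M] [Module ℝ M]
    (V : Matrix (Fin 4) (Fin 4) ℝ) (hV : ∀ α β, V α β = -V β α)
    (f : Fin 4 → Fin 4 → M) (hf : ∀ α β, f α β = f β α) :
    ∑ α : Fin 4, ∑ β : Fin 4, V α β • f α β = 0 := by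
  set S := ∑ α : Fin 4, ∑ β : Fin 4, V α β • f α β with hS
  have h : S = -S := by
    calc S = ∑ β : Fin 4, ∑ α : Fin 4, V α β • f α β := Finset.sum_comm
    _ = ∑ β : Fin 4, ∑ α : Fin 4, -(V β α • f β α) := by
        refine Finset.sum_congr rfl fun β _ => Finset.sum_congr rfl fun α _ => ?_
        rw [hV α β, hf α β, neg_smul]
    _ = -S := by rw [hS]; simp [Finset.sum_neg_distrib]
  have h2 : (2 : ℝ) • S = 0 := by rw [two_smul]; nth_rewrite 1 [h]; exact neg_add_cancel S
  rcases smul_eq_zero.mp h2 with h | h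
  · norm_num at h
  · exact h

/-- For antisymmetric `V^{αβ}`, `V_{αβ}` with `V_{αγ}V^{βγ} = δ_α^β`, the operators
`S⁺`, `S⁻` commute with `T⁺`, `T⁻`, so the two sl(2) algebras mutually commute. -/
theorem S_T_commute (Vup Vdn : Matrix (Fin 4) (Fin 4) ℝ)
    (hup : ∀ α β, Vup α β = -Vup β α) (hdn : ∀ α β, Vdn α β = -Vdn β α)
    (hinv : ∀ α β, ∑ γ : Fin 4, Vdn α γ * Vup β γ = if α = β then 1 else 0) :
    ⁅Splus Vdn, Tplus⁆ = 0 ∧ ⁅Splus Vdn, Tminus⁆ = 0 ∧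
    ⁅Sminus Vup, Tplus⁆ = 0 ∧ ⁅Sminus Vup, Tminus⁆ = 0 := by
  refine ⟨?_, ?_, ?_, ?_⟩
  · rw [Splus, Tplus]
    simp only [sum_lie']
    simp only [smul_lie'']
    simp only [lie_sum']
    simp only [comm1, Sum.inl.injEq, Sum.inr.injEq, reduceCtorEq, if_false, add_zero, zero_add,
      Finset.sum_ite_eq', Finset.mem_univ, if_true]
    exact antisym_sum Vdn hdn _ fun α β => mulX_comm' _ _
  · rw [Splus, Tminus]
    simp only [sum_lie']
    simp only [smul_lie'']
    simp only [lie_smul'']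
    simp only [lie_sum']
    simp only [comm2, Sum.inl.injEq, Sum.inr.injEq, reduceCtorEq, if_false, neg_zero, sub_zero,
      zero_sub, Finset.sum_neg_distrib, Finset.sum_ite_eq, Finset.mem_univ, if_true, smul_neg]
    rw [neg_eq_zero]
    exact antisym_sum Vdn hdn _ fun α β => by rw [dd_comm']
  · rw [Sminus, Tplus]
    simp only [sum_lie']
    simp only [smul_lie'']
    simp only [lie_sum']
    simp only [comm1, Sum.inl.injEq, Sum.inr.injEq, reduceCtorEq, if_false, add_zero, zero_add,
      Finset.sum_ite_eq', Finset.mem_univ, if_true]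
    exact antisym_sum Vup hup _ fun α β => mulX_comm' _ _
  · rw [Sminus, Tminus]
    simp only [sum_lie']
    simp only [smul_lie'']
    simp only [lie_smul'']
    simp only [lie_sum']
    simp only [comm2, Sum.inl.injEq, Sum.inr.injEq, reduceCtorEq, if_false, neg_zero, sub_zero,
      zero_sub, Finset.sum_neg_distrib, Finset.sum_ite_eq, Finset.mem_univ, if_true, smul_neg]
    rw [neg_eq_zero]
    exact antisym_sum Vup hup _ fun α β => by rw [dd_comm']
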